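/- arXiv:2409.14186 — 2 statements merged into one kernel-verified Lean document; each statement's English description precedes it below -/
import Mathlib

section
/- Let X be a geodesic metric space, o ∈ X, and for x₁, x₂ ∈ X define R_o(x₁,x₂) = sup{ r ≥ 0 : x₁ and x₂ lie in the same path component of X \ B(o,r) } (with R_o(x,x) = d(x,o)). Then d'(x₁,x₂) = d(x₁,o) + d(x₂,o) − 2 R_o(x₁,x₂) defines a pseudometric on X: it is nonnegative, symmetric, vanishes on the diagonal, and satisfies the triangle inequality. -/
open Metric

section Aux

variable {X : Type*} [MetricSpace X]

lemma aux_joined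
    (hgeo : ∀ x y : X, ∃ γ : ℝ → X, γ 0 = x ∧ γ (dist x y) = y ∧
      ∀ s ∈ Set.Icc (0 : ℝ) (dist x y), ∀ t ∈ Set.Icc (0 : ℝ) (dist x y),
        dist (γ s) (γ t) = |s - t|) (x y : X) : Joined x y := by
  obtain ⟨γ, h0, hd, hiso⟩ := hgeo x y
  set D := dist x y with hDdef
  have hD : 0 ≤ D := dist_nonneg
  have hmem : ∀ t : unitInterval, (t : ℝ) * D ∈ Set.Icc (0 : ℝ) D := by
    intro t
    constructor
    · exact mul_nonneg t.2.1 hD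
    · calc (t : ℝ) * D ≤ 1 * D := mul_le_mul_of_nonneg_right t.2.2 hD
        _ = D := one_mul D
  have hlip : LipschitzWith ⟨D, hD⟩ (fun t : unitInterval => γ ((t : ℝ) * D)) := by
    apply LipschitzWith.of_dist_le_mul
    intro s t
    rw [hiso _ (hmem s) _ (hmem t)]
    have : (s : ℝ) * D - (t : ℝ) * D = ((s : ℝ) - t) * D := by ring
    rw [this, abs_mul, abs_of_nonneg hD]
    rw [Subtype.dist_eq, Real.dist_eq]
    exact le_of_eq (mul_comm _ _)
  exact ⟨⟨⟨fun t : unitInterval => γ ((t : ℝ) * D), hlip.continuous⟩,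
    by simp [h0], by simp [hd]⟩⟩

lemma aux_S_props
    (hgeo : ∀ x y : X, ∃ γ : ℝ → X, γ 0 = x ∧ γ (dist x y) = y ∧
      ∀ s ∈ Set.Icc (0 : ℝ) (dist x y), ∀ t ∈ Set.Icc (0 : ℝ) (dist x y),
        dist (γ s) (γ t) = |s - t|) (o x y : X) :
    (0 : ℝ) ∈ {r : ℝ | 0 ≤ r ∧ JoinedIn (Metric.ball o r)ᶜ x y} ∧
    BddAbove {r : ℝ | 0 ≤ r ∧ JoinedIn (Metric.ball o r)ᶜ x y} := by
  constructor
  · refine ⟨le_refl 0, ?_⟩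
    have : (Metric.ball o (0:ℝ))ᶜ = Set.univ := by simp
    rw [this]
    exact (joinedIn_univ).2 (aux_joined hgeo x y)
  · refine ⟨dist x o, fun r hr => ?_⟩
    have hx : x ∈ (Metric.ball o r)ᶜ := hr.2.source_mem
    simpa [Metric.mem_ball, not_lt] using hx

lemma aux_mono {o x y : X} {r r' : ℝ} (h0 : 0 ≤ r') (hle : r' ≤ r)
    (hr : JoinedIn (Metric.ball o r)ᶜ x y) : r' ∈ {s : ℝ | 0 ≤ s ∧ JoinedIn (Metric.ball o s)ᶜ x y} := by
  exact ⟨h0, hr.mono (Set.compl_subset_compl.2 (Metric.ball_subset_ball hle))⟩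

end Aux

/-- On a geodesic metric space `X` with basepoint `o`, Kerr's function
`d'(x₁,x₂) = d(x₁,o) + d(x₂,o) - 2 R_o(x₁,x₂)`, where `R_o(x₁,x₂)` is the supremum of the
radii `r ≥ 0` such that `x₁` and `x₂` lie in the same path component of the complement of the
open ball `B(o,r)`, is a pseudometric: nonnegative, symmetric, zero on the diagonal, and
satisfying the triangle inequality. -/
theorem stmt4 {X : Type*} [MetricSpace X]
    (hgeo : ∀ x y : X, ∃ γ : ℝ → X, γ 0 = x ∧ γ (dist x y) = y ∧
      ∀ s ∈ Set.Icc (0 : ℝ) (dist x y), ∀ t ∈ Set.Icc (0 : ℝ) (dist x y),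
        dist (γ s) (γ t) = |s - t|)
    (o : X) :
    let R : X → X → ℝ := fun x₁ x₂ =>
      sSup {r : ℝ | 0 ≤ r ∧ JoinedIn (Metric.ball o r)ᶜ x₁ x₂}
    let d' : X → X → ℝ := fun x₁ x₂ => dist x₁ o + dist x₂ o - 2 * R x₁ x₂
    (∀ x, d' x x = 0) ∧ (∀ x₁ x₂, 0 ≤ d' x₁ x₂) ∧ (∀ x₁ x₂, d' x₁ x₂ = d' x₂ x₁) ∧
      (∀ x₁ x₂ x₃, d' x₁ x₃ ≤ d' x₁ x₂ + d' x₂ x₃) := by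
  intro R d'
  have hzero : ∀ x y, (0 : ℝ) ∈ {r : ℝ | 0 ≤ r ∧ JoinedIn (Metric.ball o r)ᶜ x y} :=
    fun x y => (aux_S_props hgeo o x y).1
  have hbdd : ∀ x y, BddAbove {r : ℝ | 0 ≤ r ∧ JoinedIn (Metric.ball o r)ᶜ x y} :=
    fun x y => (aux_S_props hgeo o x y).2
  have hne : ∀ x y, ({r : ℝ | 0 ≤ r ∧ JoinedIn (Metric.ball o r)ᶜ x y}).Nonempty :=
    fun x y => ⟨0, hzero x y⟩
  have hR0 : ∀ x y, 0 ≤ R x y := fun x y => le_csSup (hbdd x y) (hzero x y)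
  have hRle : ∀ x y, R x y ≤ dist x o := by
    intro x y
    apply csSup_le (hne x y)
    intro r hr
    have hx : x ∈ (Metric.ball o r)ᶜ := hr.2.source_mem
    simpa [Metric.mem_ball, not_lt] using hx
  have hsymm : ∀ x y, R x y = R y x := by
    intro x y
    have : ∀ a b : X, {r : ℝ | 0 ≤ r ∧ JoinedIn (Metric.ball o r)ᶜ a b} ⊆
        {r : ℝ | 0 ≤ r ∧ JoinedIn (Metric.ball o r)ᶜ b a} :=
      fun a b r hr => ⟨hr.1, hr.2.symm⟩
    exact le_antisymm (csSup_le_csSup (hbdd y x) (hne x y) (this x y))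
      (csSup_le_csSup (hbdd x y) (hne y x) (this y x))
  have hRxx : ∀ x, R x x = dist x o := by
    intro x
    have hset : {r : ℝ | 0 ≤ r ∧ JoinedIn (Metric.ball o r)ᶜ x x} = Set.Icc 0 (dist x o) := by
      ext r
      constructor
      · intro hr
        have hx : x ∈ (Metric.ball o r)ᶜ := hr.2.source_mem
        exact ⟨hr.1, by simpa [Metric.mem_ball, not_lt] using hx⟩
      · intro hr
        refine ⟨hr.1, JoinedIn.refl ?_⟩
        simp [Metric.mem_ball, not_lt, hr.2]
    rw [show R x x = sSup {r : ℝ | 0 ≤ r ∧ JoinedIn (Metric.ball o r)ᶜ x x} from rfl, hset,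
      csSup_Icc dist_nonneg]
  -- key: min (R x₁ x₂) (R x₂ x₃) ≤ R x₁ x₃
  have hkey : ∀ x₁ x₂ x₃, min (R x₁ x₂) (R x₂ x₃) ≤ R x₁ x₃ := by
    intro x₁ x₂ x₃
    by_contra h
    push_neg at h
    obtain ⟨r, hr, hrlt⟩ := exists_lt_of_lt_csSup (hne x₁ x₂) (lt_min_iff.1 h).1
    obtain ⟨s, hs, hslt⟩ := exists_lt_of_lt_csSup (hne x₂ x₃) (lt_min_iff.1 h).2
    have hm0 : 0 ≤ min r s := le_min hr.1 hs.1
    have h12 : JoinedIn (Metric.ball o (min r s))ᶜ x₁ x₂ :=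
      (aux_mono hm0 (min_le_left r s) hr.2).2
    have h23 : JoinedIn (Metric.ball o (min r s))ᶜ x₂ x₃ :=
      (aux_mono hm0 (min_le_right r s) hs.2).2
    have h13 : min r s ∈ {t : ℝ | 0 ≤ t ∧ JoinedIn (Metric.ball o t)ᶜ x₁ x₃} :=
      ⟨hm0, h12.trans h23⟩
    have h1 := le_csSup (hbdd x₁ x₃) h13
    have h2 : R x₁ x₃ < min r s := lt_min hrlt hslt
    linarith
  refine ⟨?_, ?_, ?_, ?_⟩
  · intro x
    simp only [d']
    rw [hRxx x]
    ring
  · intro x₁ x₂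
    have h1 : R x₁ x₂ ≤ dist x₁ o := hRle x₁ x₂
    have h2 : R x₁ x₂ ≤ dist x₂ o := by rw [hsymm]; exact hRle x₂ x₁
    simp only [d']
    linarith
  · intro x₁ x₂
    simp only [d']
    rw [hsymm x₁ x₂]
    ring
  · intro x₁ x₂ x₃
    have hk := hkey x₁ x₂ x₃
    have h12 : R x₁ x₂ ≤ dist x₂ o := by rw [hsymm]; exact hRle x₂ x₁
    have h23 : R x₂ x₃ ≤ dist x₂ o := hRle x₂ x₃
    have hmm : min (R x₁ x₂) (R x₂ x₃) + max (R x₁ x₂) (R x₂ x₃) = R x₁ x₂ + R x₂ x₃ :=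
      min_add_max _ _
    have hmax : max (R x₁ x₂) (R x₂ x₃) ≤ dist x₂ o := max_le h12 h23
    simp only [d']
    linarith
end

section
/- Let G be a group with length function |·|, H ≤ G a finite-index subgroup, and C ≥ 1, B > 0. Suppose H admits an affine action σ on ℓ¹ whose linear part is a representation by operators of norm at most C and whose cocycle b satisfies ‖b(t)‖₁ ≥ |t| − B for all t ∈ H. Then there exists B̃ > 0 such that G admits an affine action σ̃ on ℓ¹(G/H; ℓ¹) (which is isometrically isomorphic to ℓ¹ when G is countable) whose linear part consists of operators of norm at most C and whose cocycle b̃ satisfies ‖b̃(s)‖ ≥ |s| − B̃ for all s ∈ G. -/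
open scoped ENNReal

noncomputable section Stmt12Aux

variable {G : Type*} [Group G] (H : Subgroup G)

private lemma stmt12_mem (s : G) (x : G ⧸ H) :
    (s • x).out⁻¹ * (s * x.out) ∈ H := by
  apply QuotientGroup.eq.mp
  rw [QuotientGroup.out_eq', ← smul_eq_mul]
  exact (MulAction.Quotient.mk_smul_out H s x).symm

/-- The cocycle `α(s,x) = ω(s•x)⁻¹ s ω(x)`. -/
private def stmt12α (s : G) (x : G ⧸ H) : H :=
  ⟨(s • x).out⁻¹ * (s * x.out), stmt12_mem H s x⟩

private lemma stmt12α_coe (s : G) (x : G ⧸ H) :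
    (stmt12α H s x : G) = (s • x).out⁻¹ * (s * x.out) := rfl

private lemma stmt12α_one (x : G ⧸ H) : stmt12α H 1 x = 1 := by
  apply Subtype.ext
  simp [stmt12α]

private lemma stmt12α_mul (s t : G) (x : G ⧸ H) :
    stmt12α H (s * t) x = stmt12α H s (t • x) * stmt12α H t x := by
  apply Subtype.ext
  show ((s * t) • x).out⁻¹ * ((s * t) * x.out)
      = ((s • t • x).out⁻¹ * (s * (t • x).out)) * ((t • x).out⁻¹ * (t * x.out))
  rw [mul_smul]
  group

end Stmt12Aux

private lemma stmt12_norm_lp_one {ι : Type*} [Fintype ι] {E : ι → Type*}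
    [∀ i, NormedAddCommGroup (E i)] (f : lp E 1) : ‖f‖ = ∑ i, ‖f i‖ := by
  rw [lp.norm_eq_tsum_rpow (by norm_num) f, tsum_fintype]
  simp

noncomputable section Stmt12Main

variable {G : Type*} [Group G] (H : Subgroup G) [Finite (G ⧸ H)]
  (π : H →* (lp (fun _ : ℕ => ℝ) 1 ≃L[ℝ] lp (fun _ : ℕ => ℝ) 1))

/-- The linear part of the induced action, as a linear map. -/
private def stmt12T (s : G) :
    lp (fun _ : G ⧸ H => lp (fun _ : ℕ => ℝ) 1) 1 →ₗ[ℝ]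
      lp (fun _ : G ⧸ H => lp (fun _ : ℕ => ℝ) 1) 1 where
  toFun f := ⟨fun x => π (stmt12α H s (s⁻¹ • x)) (f (s⁻¹ • x)), Memℓp.all _⟩
  map_add' f g := by
    apply lp.ext
    funext x
    show π _ ((f + g) (s⁻¹ • x)) = _
    rw [lp.coeFn_add, Pi.add_apply, map_add]
    rfl
  map_smul' c f := by
    apply lp.ext
    funext x
    show π _ ((c • f) (s⁻¹ • x)) = _
    rw [lp.coeFn_smul, Pi.smul_apply, map_smul]
    rfl

private lemma stmt12T_apply (s : G) (f) (x : G ⧸ H) :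
    (stmt12T H π s f : ∀ _ : G ⧸ H, lp (fun _ : ℕ => ℝ) 1) x
      = π (stmt12α H s (s⁻¹ • x)) (f (s⁻¹ • x)) := rfl

private lemma stmt12T_mul (s t : G) :
    stmt12T H π (s * t) = (stmt12T H π s).comp (stmt12T H π t) := by
  apply LinearMap.ext
  intro f
  apply lp.ext
  funext x
  rw [LinearMap.comp_apply, stmt12T_apply, stmt12T_apply, stmt12T_apply]
  have h1 : (s * t)⁻¹ • x = t⁻¹ • s⁻¹ • x := by rw [mul_inv_rev, mul_smul]
  have h2 : stmt12α H (s * t) ((s * t)⁻¹ • x)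
      = stmt12α H s (s⁻¹ • x) * stmt12α H t ((s * t)⁻¹ • x) := by
    have := stmt12α_mul H s t ((s * t)⁻¹ • x)
    rwa [h1, smul_inv_smul, ← h1] at this
  rw [h2, h1, map_mul]
  rfl

private lemma stmt12T_one : stmt12T H π 1 = LinearMap.id := by
  apply LinearMap.ext
  intro f
  apply lp.ext
  funext x
  rw [stmt12T_apply]
  simp only [stmt12α_one, map_one, inv_one, one_smul, LinearMap.id_coe, id_eq]
  rfl

variable {C : ℝ}

private lemma stmt12_pt_bound (hπ : ∀ t : H, ‖(π t).toContinuousLinearMap‖ ≤ C) (t : H) (v : lp (fun _ : ℕ => ℝ) 1) :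
    ‖π t v‖ ≤ C * ‖v‖ :=
  ((π t).toContinuousLinearMap.le_opNorm v).trans
    (mul_le_mul_of_nonneg_right (hπ t) (norm_nonneg v))

private lemma stmt12T_bound (hπ : ∀ t : H, ‖(π t).toContinuousLinearMap‖ ≤ C) (s : G) (f) : ‖stmt12T H π s f‖ ≤ C * ‖f‖ := by
  cases nonempty_fintype (G ⧸ H)
  rw [stmt12_norm_lp_one, stmt12_norm_lp_one, Finset.mul_sum]
  calc ∑ x, ‖(stmt12T H π s f : ∀ _ : G ⧸ H, lp (fun _ : ℕ => ℝ) 1) x‖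
      ≤ ∑ x, C * ‖f (s⁻¹ • x)‖ := by
        refine Finset.sum_le_sum fun x _ => ?_
        rw [stmt12T_apply]
        exact stmt12_pt_bound H π hπ _ _
    _ = ∑ x, C * ‖f x‖ := Equiv.sum_comp (MulAction.toPerm s⁻¹) (fun y => C * ‖f y‖)

/-- The linear part of the induced action, as a continuous linear equivalence. -/
private def stmt12E (hπ : ∀ t : H, ‖(π t).toContinuousLinearMap‖ ≤ C) (s : G) :
    lp (fun _ : G ⧸ H => lp (fun _ : ℕ => ℝ) 1) 1 ≃L[ℝ]
      lp (fun _ : G ⧸ H => lp (fun _ : ℕ => ℝ) 1) 1 :=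
  ContinuousLinearEquiv.equivOfInverse
    ((stmt12T H π s).mkContinuous C (stmt12T_bound H π hπ s))
    ((stmt12T H π s⁻¹).mkContinuous C (stmt12T_bound H π hπ s⁻¹))
    (fun f => by
      show (stmt12T H π s⁻¹) ((stmt12T H π s) f) = f
      rw [← LinearMap.comp_apply, ← stmt12T_mul, inv_mul_cancel, stmt12T_one]
      rfl)
    (fun f => by
      show (stmt12T H π s) ((stmt12T H π s⁻¹) f) = f
      rw [← LinearMap.comp_apply, ← stmt12T_mul, mul_inv_cancel, stmt12T_one]
      rfl)

private lemma stmt12E_apply (hπ : ∀ t : H, ‖(π t).toContinuousLinearMap‖ ≤ C) (s : G) (f) : stmt12E H π hπ s f = stmt12T H π s f := rfl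

/-- The induced representation as a monoid hom. -/
private def stmt12Pi (hπ : ∀ t : H, ‖(π t).toContinuousLinearMap‖ ≤ C) :
    G →* (lp (fun _ : G ⧸ H => lp (fun _ : ℕ => ℝ) 1) 1 ≃L[ℝ]
      lp (fun _ : G ⧸ H => lp (fun _ : ℕ => ℝ) 1) 1) :=
  MonoidHom.mk' (fun s => stmt12E H π hπ s) (by
    intro s t
    apply ContinuousLinearEquiv.ext
    funext f
    show stmt12T H π (s * t) f = stmt12T H π s (stmt12T H π t f)
    rw [stmt12T_mul]
    rfl)

end Stmt12Main

/-- Induction of affine actions from a finite-index subgroup: if `H ≤ G` has finite index,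
`|·|` is a length function on `G`, and `H` admits an affine action on `ℓ¹` whose linear part
is a representation by operators of norm at most `C` and whose cocycle `b` satisfies
`‖b t‖ ≥ |t| - B`, then `G` admits an affine action on `ℓ¹(G/H; ℓ¹)` whose linear part
consists of operators of norm at most `C` and whose cocycle `b̃` satisfies
`‖b̃ s‖ ≥ |s| - B̃` for some constant `B̃ > 0`. -/
theorem stmt12 {G : Type*} [Group G] (H : Subgroup G) [H.FiniteIndex]
    (len : G → ℝ) (hlen1 : len 1 = 0) (hsub : ∀ s t : G, len (s * t) ≤ len s + len t)
    (C : ℝ) (hC : 1 ≤ C) (B : ℝ) (hB : 0 < B)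
    (π : H →* (lp (fun _ : ℕ => ℝ) 1 ≃L[ℝ] lp (fun _ : ℕ => ℝ) 1))
    (hπ : ∀ t : H, ‖(π t).toContinuousLinearMap‖ ≤ C)
    (b : H → lp (fun _ : ℕ => ℝ) 1)
    (hb : ∀ s t : H, b (s * t) = π s (b t) + b s)
    (hblow : ∀ t : H, len (t : G) - B ≤ ‖b t‖) :
    ∃ B' : ℝ, 0 < B' ∧
      ∃ (π' : G →* (lp (fun _ : G ⧸ H => lp (fun _ : ℕ => ℝ) 1) 1 ≃L[ℝ]
            lp (fun _ : G ⧸ H => lp (fun _ : ℕ => ℝ) 1) 1))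
        (b' : G → lp (fun _ : G ⧸ H => lp (fun _ : ℕ => ℝ) 1) 1),
        (∀ s : G, ‖(π' s).toContinuousLinearMap‖ ≤ C) ∧
        (∀ s t : G, b' (s * t) = π' s (b' t) + b' s) ∧
        ∀ s : G, len s - B' ≤ ‖b' s‖ := by
  classical
  cases nonempty_fintype (G ⧸ H)
  -- the constant
  set M : ℝ := ∑ x : G ⧸ H, (|len x.out| + |len x.out⁻¹|) with hM
  have hMle : ∀ x : G ⧸ H, |len x.out| + |len x.out⁻¹| ≤ M :=
    fun x => Finset.single_le_sum
      (f := fun x : G ⧸ H => |len x.out| + |len x.out⁻¹|)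
      (fun i _ => by positivity) (Finset.mem_univ x)
  have hM0 : 0 ≤ M := le_trans (by positivity) (hMle (QuotientGroup.mk 1 : G ⧸ H))
  refine ⟨B + 2 * M + 1, by linarith, stmt12Pi H π hπ,
    fun s => ⟨fun x => b (stmt12α H s (s⁻¹ • x)), Memℓp.all _⟩, ?_, ?_, ?_⟩
  · -- norm bound
    intro s
    refine ContinuousLinearMap.opNorm_le_bound _ (by linarith) fun f => ?_
    exact stmt12T_bound H π hπ s f
  · -- cocycle identity
    intro s t
    apply lp.ext
    funext x
    show b (stmt12α H (s * t) ((s * t)⁻¹ • x)) = _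
    rw [lp.coeFn_add, Pi.add_apply]
    have h1 : (s * t)⁻¹ • x = t⁻¹ • s⁻¹ • x := by rw [mul_inv_rev, mul_smul]
    have h2 : stmt12α H (s * t) ((s * t)⁻¹ • x)
        = stmt12α H s (s⁻¹ • x) * stmt12α H t ((s * t)⁻¹ • x) := by
      have := stmt12α_mul H s t ((s * t)⁻¹ • x)
      rwa [h1, smul_inv_smul, ← h1] at this
    rw [h2, hb]
    congr 1
    show _ = (stmt12T H π s ⟨fun y => b (stmt12α H t (t⁻¹ • y)), Memℓp.all _⟩ :
        ∀ _ : G ⧸ H, lp (fun _ : ℕ => ℝ) 1) x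
    rw [stmt12T_apply]
    show π _ (b (stmt12α H t ((s*t)⁻¹ • x))) = π _ (b (stmt12α H t (t⁻¹ • (s⁻¹ • x))))
    rw [h1]
  · -- lower bound
    intro s
    set y : G ⧸ H := s⁻¹ • QuotientGroup.mk s with hy
    have key : len s - 2 * M - B ≤ ‖b (stmt12α H s y)‖ := by
      have h1 := hblow (stmt12α H s y)
      have h2 : len ((stmt12α H s y : G)) ≥ len s - 2 * M := by
        rw [stmt12α_coe]
        have e1 : s = (s • y).out * ((s • y).out⁻¹ * (s * y.out)) * y.out⁻¹ := by group
        have e2 : len s ≤ len (s • y).out + len ((s • y).out⁻¹ * (s * y.out)) +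
            len y.out⁻¹ := by
          calc len s = len ((s • y).out * ((s • y).out⁻¹ * (s * y.out)) * y.out⁻¹) := by
                rw [← e1]
            _ ≤ len ((s • y).out * ((s • y).out⁻¹ * (s * y.out))) + len y.out⁻¹ :=
                hsub _ _
            _ ≤ len (s • y).out + len ((s • y).out⁻¹ * (s * y.out)) + len y.out⁻¹ := by
                linarith [hsub (s • y).out ((s • y).out⁻¹ * (s * y.out))]
        have b1 : len (s • y).out ≤ M :=
          le_trans (le_abs_self _) (le_trans (by linarith [abs_nonneg (len (s • y).out⁻¹)])
            (hMle (s • y)))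
        have b2 : len y.out⁻¹ ≤ M :=
          le_trans (le_abs_self _) (le_trans (by linarith [abs_nonneg (len y.out)])
            (hMle y))
        linarith
      linarith
    have hsum : ‖b (stmt12α H s y)‖ ≤
        ‖(⟨fun x => b (stmt12α H s (s⁻¹ • x)), Memℓp.all _⟩ :
          lp (fun _ : G ⧸ H => lp (fun _ : ℕ => ℝ) 1) 1)‖ := by
      rw [stmt12_norm_lp_one (⟨fun x => b (stmt12α H s (s⁻¹ • x)), Memℓp.all _⟩ :
        lp (fun _ : G ⧸ H => lp (fun _ : ℕ => ℝ) 1) 1)]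
      have := Finset.single_le_sum
        (f := fun x : G ⧸ H => ‖b (stmt12α H s (s⁻¹ • x))‖)
        (fun i _ => norm_nonneg _) (Finset.mem_univ (QuotientGroup.mk s : G ⧸ H))
      exact this
    linarith
end
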